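/- Let p > 2 be prime, r > 1 an integer with r ≡ 1 (mod p-1), and t = v_p(r-1). Let μ be a nonzero element of F_p and [μ] ∈ Z_p its Teichmüller lift. Then in Z_p[x,y], the polynomial (-[μ]x + py)^r - x^{r-1}(-[μ]x + py) is congruent to (r-1)·p·x^{r-1}·y modulo p^{t+2}. -/

import Mathlib

open MvPolynomial

private lemma aux3pow : ∀ e : ℕ, 1 ≤ e → e + 2 ≤ 3 ^ e := by
  intro e he
  induction e with
  | zero => omega
  | succ n ih =>
    rcases Nat.eq_zero_or_pos n with h | h
    · subst h; norm_num
    · have h3 : n + 2 ≤ 3 ^ n := ih h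
      have : 3 ^ (n + 1) = 3 * 3 ^ n := by ring
      omega

private lemma key_dvd (p : ℕ) [hp : Fact p.Prime] (hodd : 2 < p) (r : ℕ) (hr : 1 < r)
    (t : ℕ) (ht : t = padicValNat p (r - 1)) (j : ℕ) (hj2 : 2 ≤ j) :
    p ^ (t + 2) ∣ r.choose j * p ^ j := by
  obtain ⟨a, rfl⟩ : ∃ a, r = a + 2 := ⟨r - 2, by omega⟩
  obtain ⟨b, rfl⟩ : ∃ b, j = b + 2 := ⟨j - 2, by omega⟩
  have hpt : p ^ t ∣ (a + 1) := by
    rw [ht]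
    exact pow_padicValNat_dvd
  have h1 := Nat.add_one_mul_choose_eq (a + 1) (b + 1)
  have h2 := Nat.add_one_mul_choose_eq a b
  try simp only [Nat.succ_eq_add_one] at h1 h2
  have hid : (a + 2).choose (b + 2) * ((b + 2) * (b + 1))
      = (a + 2) * ((a + 1) * a.choose b) := by
    calc (a + 2).choose (b + 2) * ((b + 2) * (b + 1))
        = ((a + 1 + 1).choose (b + 1 + 1) * (b + 1 + 1)) * (b + 1) := by ring_nf
      _ = ((a + 1 + 1) * (a + 1).choose (b + 1)) * (b + 1) := by rw [← h1]
      _ = (a + 1 + 1) * ((a + 1).choose (b + 1) * (b + 1)) := by ring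
      _ = (a + 2) * ((a + 1) * a.choose b) := by rw [← h2]
  have hdvd1 : p ^ t ∣ (a + 2).choose (b + 2) * ((b + 2) * (b + 1)) := by
    rw [hid]
    exact Dvd.dvd.mul_left (hpt.mul_right _) _
  set n := (b + 2) * (b + 1) with hn_def
  have hn : n ≠ 0 := by positivity
  set e := padicValNat p n with he_def
  have hpe : p ^ e ∣ n := pow_padicValNat_dvd
  have hpu : ¬ p ∣ (n / p ^ e) := by
    intro hdvd
    obtain ⟨w, hw⟩ := hdvd
    have : p ^ (e + 1) ∣ n := by
      refine ⟨w, ?_⟩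
      rw [← Nat.mul_div_cancel' hpe, hw]
      ring
    exact pow_succ_padicValNat_not_dvd hn this
  -- e ≤ b
  have heb : e ≤ b := by
    have hcop : ¬ (p ∣ (b + 2) ∧ p ∣ (b + 1)) := by
      rintro ⟨hd1, hd2⟩
      have hsub := Nat.dvd_sub hd1 hd2
      have h1 : b + 2 - (b + 1) = 1 := by omega
      rw [h1] at hsub
      have := Nat.le_of_dvd one_pos hsub
      omega
    have hpow_le : p ^ e ≤ b + 2 := by
      have hmul : e = padicValNat p (b + 2) + padicValNat p (b + 1) := by
        rw [he_def, hn_def, padicValNat.mul (by omega) (by omega)]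
      rcases Classical.em (p ∣ (b + 2)) with hd1 | hd1
      · have h0 : padicValNat p (b + 1) = 0 := by
          apply padicValNat.eq_zero_of_not_dvd
          intro hd2; exact hcop ⟨hd1, hd2⟩
        have : e = padicValNat p (b + 2) := by omega
        have hdd : p ^ e ∣ b + 2 := this ▸ pow_padicValNat_dvd
        exact Nat.le_of_dvd (by omega) hdd
      · have h0 : padicValNat p (b + 2) = 0 := padicValNat.eq_zero_of_not_dvd hd1
        have : e = padicValNat p (b + 1) := by omega
        have hdd : p ^ e ∣ b + 1 := this ▸ pow_padicValNat_dvd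
        exact (Nat.le_of_dvd (by omega) hdd).trans (by omega)
    rcases Nat.eq_zero_or_pos e with h | h
    · omega
    · have h3 : e + 2 ≤ 3 ^ e := aux3pow e h
      have h4 : 3 ^ e ≤ p ^ e := Nat.pow_le_pow_left (by omega) e
      omega
  have h3 : p ^ t ∣ (a + 2).choose (b + 2) * p ^ e := by
    have hco : (p ^ t).Coprime (n / p ^ e) :=
      Nat.Coprime.pow_left _ ((Fact.out (p := p.Prime)).coprime_iff_not_dvd.mpr hpu)
    refine hco.dvd_of_dvd_mul_right ?_
    have heq : (a + 2).choose (b + 2) * p ^ e * (n / p ^ e)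
        = (a + 2).choose (b + 2) * n := by
      rw [mul_assoc, Nat.mul_div_cancel' hpe]
    rw [heq]
    exact hdvd1
  have h5 : p ^ (t + 2) ∣ p ^ (t + (b + 2 - e)) := pow_dvd_pow p (by omega)
  refine h5.trans ?_
  rw [pow_add]
  have h6 : p ^ t * p ^ (b + 2 - e) ∣ ((a + 2).choose (b + 2) * p ^ e) * p ^ (b + 2 - e) :=
    mul_dvd_mul_right h3 _
  have h7 : ((a + 2).choose (b + 2) * p ^ e) * p ^ (b + 2 - e)
      = (a + 2).choose (b + 2) * p ^ (b + 2) := by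
    rw [mul_assoc, ← pow_add]
    congr 2
    omega
  rwa [h7] at h6

theorem stmt_6 (p : ℕ) [Fact p.Prime] (hp : 2 < p) (r : ℕ) (hr : 1 < r)
    (hcong : (p - 1) ∣ (r - 1)) (t : ℕ) (ht : t = padicValNat p (r - 1))
    (μ : ZMod p) (hμ : μ ≠ 0) (Tμ : ℤ_[p]) (hTμ1 : Tμ ^ p = Tμ)
    (hTμ2 : PadicInt.toZMod Tμ = μ) :
    let x : MvPolynomial (Fin 2) ℤ_[p] := X 0
    let y : MvPolynomial (Fin 2) ℤ_[p] := X 1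
    ∃ D : MvPolynomial (Fin 2) ℤ_[p],
      (-(C Tμ) * x + (p : MvPolynomial (Fin 2) ℤ_[p]) * y) ^ r
        - x ^ (r - 1) * (-(C Tμ) * x + (p : MvPolynomial (Fin 2) ℤ_[p]) * y)
        - ((r - 1 : ℤ_[p]) • ((p : MvPolynomial (Fin 2) ℤ_[p]) * x ^ (r - 1) * y))
      = (p : MvPolynomial (Fin 2) ℤ_[p]) ^ (t + 2) * D := by
  intro x y
  have hTne : Tμ ≠ 0 := by
    intro h
    apply hμ
    rw [← hTμ2, h]
    simp
  obtain ⟨s, rfl⟩ : ∃ s, r = s + 2 := ⟨r - 2, by omega⟩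
  rw [show s + 2 - 1 = s + 1 by omega] at ht hcong ⊢
  -- Tμ ^ (s+1) = 1
  obtain ⟨m, hm⟩ := hcong
  have hstep : ∀ n : ℕ, Tμ ^ ((p - 1) * n) * Tμ = Tμ := by
    intro n
    induction n with
    | zero => simp
    | succ k ih =>
      have : (p - 1) * (k + 1) = (p - 1) * k + (p - 1) := by ring
      rw [this, pow_add, mul_assoc, ← pow_succ]
      have hps : p - 1 + 1 = p := by omega
      rw [hps, hTμ1]
      exact ih
  have hT1 : Tμ ^ (s + 1) = 1 := by
    have := hstep m
    rw [← hm] at this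
    have h2 : Tμ ^ (s + 1) * Tμ = 1 * Tμ := by rw [this, one_mul]
    exact mul_right_cancel₀ hTne h2
  -- parity: s + 1 is even
  have hpodd : Odd p := (Fact.out (p := p.Prime)).odd_of_ne_two (by omega)
  have hevenp : Even (p - 1) := by
    obtain ⟨c, hc⟩ := hpodd
    exact ⟨c, by omega⟩
  have hevens : Even (s + 1) := by
    rw [hm]
    exact hevenp.mul_right m
  have hC1 : (-(C Tμ) : MvPolynomial (Fin 2) ℤ_[p]) ^ (s + 1) = 1 := by
    rw [Even.neg_pow hevens, ← C_pow, hT1, C_1]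
  have hA1 : (-(C Tμ) * x : MvPolynomial (Fin 2) ℤ_[p]) ^ (s + 1) = x ^ (s + 1) := by
    rw [mul_pow, hC1, one_mul]
  have hA2 : (-(C Tμ) * x : MvPolynomial (Fin 2) ℤ_[p]) ^ (s + 2)
      = x ^ (s + 1) * (-(C Tμ) * x) := by
    rw [pow_succ, hA1]
  -- choose value
  have hch : (s + 2).choose (s + 1) = s + 2 := Nat.choose_succ_self_right (s + 1)
  refine ⟨∑ k ∈ Finset.range (s + 1),
    (C (((s + 2).choose k * p ^ (s + 2 - k) / p ^ (t + 2) : ℕ) : ℤ_[p]))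
      * (-(C Tμ) * x) ^ k * y ^ (s + 2 - k), ?_⟩
  rw [add_pow, Finset.sum_range_succ, Finset.sum_range_succ]
  have hsum : ∑ k ∈ Finset.range (s + 1),
      (-(C Tμ) * x) ^ k * ((p : MvPolynomial (Fin 2) ℤ_[p]) * y) ^ (s + 2 - k)
        * ((s + 2).choose k : MvPolynomial (Fin 2) ℤ_[p])
      = (p : MvPolynomial (Fin 2) ℤ_[p]) ^ (t + 2) * ∑ k ∈ Finset.range (s + 1),
        (C (((s + 2).choose k * p ^ (s + 2 - k) / p ^ (t + 2) : ℕ) : ℤ_[p]))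
          * (-(C Tμ) * x) ^ k * y ^ (s + 2 - k) := by
    rw [Finset.mul_sum]
    refine Finset.sum_congr rfl ?_
    intro k hk
    have hk' : k ≤ s := Finset.mem_range_succ_iff.mp hk
    have hdvd : p ^ (t + 2) ∣ (s + 2).choose k * p ^ (s + 2 - k) := by
      have := key_dvd p hp (s + 2) (by omega) t ht (s + 2 - k) (by omega)
      rwa [Nat.choose_symm (by omega : k ≤ s + 2)] at this
    have hc : p ^ (t + 2) * ((s + 2).choose k * p ^ (s + 2 - k) / p ^ (t + 2))
        = (s + 2).choose k * p ^ (s + 2 - k) := Nat.mul_div_cancel' hdvd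
    have hcR : (p : MvPolynomial (Fin 2) ℤ_[p]) ^ (t + 2)
          * (C (((s + 2).choose k * p ^ (s + 2 - k) / p ^ (t + 2) : ℕ) : ℤ_[p]))
        = ((s + 2).choose k : MvPolynomial (Fin 2) ℤ_[p])
          * (p : MvPolynomial (Fin 2) ℤ_[p]) ^ (s + 2 - k) := by
      have hcast := congrArg (Nat.cast : ℕ → MvPolynomial (Fin 2) ℤ_[p]) hc
      push_cast at hcast
      rw [C_eq_coe_nat]
      linear_combination hcast
    linear_combination (-((-(C Tμ) * x) ^ k * y ^ (s + 2 - k))) * hcR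
  rw [show s + 2 - (s + 1) = 1 by omega, show s + 2 - (s + 2) = 0 by omega,
    Nat.choose_self, hch, hA1, hA2, hsum, MvPolynomial.smul_eq_C_mul, map_sub, map_one,
    map_natCast]
  ring
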